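/- Let μ be a probability measure on [0,∞) with Laplace transform φ(s) = ∫ e^{−sx} dμ(x), and let j ≥ 0 and k ≥ 1 be integers and θ > 0. Then s ↦ s^j · φ((1 − s^k)/θ) is a probability generating function: there exists a sequence (q_n)_{n∈ℕ} with q_n ≥ 0 for all n and ∑_{n=0}^{∞} q_n = 1, such that ∑_{n=0}^{∞} q_n · s^n = s^j · φ((1 − s^k)/θ) for every s ∈ [0,1]. -/

import Mathlib

open MeasureTheory


lemma exp_series_hasSum (x : ℝ) : HasSum (fun m : ℕ => x ^ m / (Nat.factorial m : ℝ)) (Real.exp x) := by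
  rw [Real.exp_eq_exp_ℝ]
  exact NormedSpace.expSeries_div_hasSum_exp x

lemma key_hasSum (μ : Measure ℝ) [IsProbabilityMeasure μ]
    (hconc : μ (Set.Iio 0) = 0) (θ : ℝ) (hθ : 0 < θ) (t : ℝ) (ht0 : 0 ≤ t) (ht1 : t ≤ 1) :
    HasSum (fun m : ℕ => (∫ x, Real.exp (-x / θ) * (x / θ) ^ m / (Nat.factorial m : ℝ) ∂μ) * t ^ m)
      (∫ x, Real.exp (-((1 - t) / θ) * x) ∂μ) := by
  have hae : ∀ᵐ x ∂μ, 0 ≤ x := by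
    rw [ae_iff]
    convert hconc using 2
    ext x; simp [not_le, Set.mem_Iio]
  have hmain : HasSum (fun m : ℕ => ∫ x, Real.exp (-x / θ) * (x / θ) ^ m / (Nat.factorial m : ℝ) * t ^ m ∂μ)
      (∫ x, Real.exp (-((1 - t) / θ) * x) ∂μ) := by
    apply hasSum_integral_of_dominated_convergence
      (bound := fun m x => Real.exp (-x / θ) * (x / θ) ^ m / (Nat.factorial m : ℝ))
    · intro m
      exact (((Real.continuous_exp.comp (continuous_id.neg.div_const θ)).mul
        ((continuous_id.div_const θ).pow m)).div_const _).mul continuous_const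
        |>.aestronglyMeasurable
    · intro m
      filter_upwards [hae] with x hx
      have h1 : 0 ≤ Real.exp (-x / θ) * (x / θ) ^ m / (Nat.factorial m : ℝ) := by positivity
      rw [Real.norm_eq_abs, abs_mul, abs_of_nonneg h1, abs_of_nonneg (pow_nonneg ht0 m)]
      calc Real.exp (-x / θ) * (x / θ) ^ m / (Nat.factorial m : ℝ) * t ^ m
          ≤ Real.exp (-x / θ) * (x / θ) ^ m / (Nat.factorial m : ℝ) * 1 ^ m := by
            apply mul_le_mul_of_nonneg_left (pow_le_pow_left₀ ht0 ht1 m) h1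
        _ = Real.exp (-x / θ) * (x / θ) ^ m / (Nat.factorial m : ℝ) := by ring
    · filter_upwards with x
      exact ((exp_series_hasSum (x / θ)).mul_left (Real.exp (-x / θ))).summable.congr
        (fun m => by ring)
    · have : ∀ x : ℝ, (∑' m : ℕ, Real.exp (-x / θ) * (x / θ) ^ m / (Nat.factorial m : ℝ)) = 1 := by
        intro x
        have h := ((exp_series_hasSum (x / θ)).mul_left (Real.exp (-x / θ)))
        have h2 : HasSum (fun m : ℕ => Real.exp (-x / θ) * (x / θ) ^ m / (Nat.factorial m : ℝ))
            (Real.exp (-x / θ) * Real.exp (x / θ)) := h.congr_fun (fun m => by ring)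
        rw [h2.tsum_eq, ← Real.exp_add, neg_div, neg_add_cancel]
        simp
      simp only [this]
      exact integrable_const 1
    · filter_upwards with x
      have h := ((exp_series_hasSum (t * x / θ)).mul_left (Real.exp (-x / θ)))
      have heq : Real.exp (-x / θ) * Real.exp (t * x / θ) = Real.exp (-((1 - t) / θ) * x) := by
        rw [← Real.exp_add]; congr 1; field_simp; ring
      rw [heq] at h
      exact h.congr_fun (fun m => by rw [mul_div_assoc t x θ, mul_pow]; ring)
  refine hmain.congr_fun fun m => ?_
  rw [← integral_mul_const]

/-- Lemma 4.1: for any Laplace transform `φ` of a probability measure `μ` on `[0,∞)`,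
integers `j ≥ 0`, `k ≥ 1` and `θ > 0`, the function `s ↦ s^j · φ((1 - s^k)/θ)` is a
probability generating function. -/
theorem pgf_class_of_laplace_transform (μ : Measure ℝ) [IsProbabilityMeasure μ]
    (hconc : μ (Set.Iio 0) = 0)
    (φ : ℝ → ℝ) (hφ : ∀ s : ℝ, φ s = ∫ x, Real.exp (-s * x) ∂μ)
    (j k : ℕ) (hk : 1 ≤ k) (θ : ℝ) (hθ : 0 < θ) :
    ∃ q : ℕ → ℝ, (∀ n, 0 ≤ q n) ∧ HasSum q 1 ∧
      ∀ s ∈ Set.Icc (0 : ℝ) 1,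
        HasSum (fun n : ℕ => q n * s ^ n) (s ^ j * φ ((1 - s ^ k) / θ)) := by
  have hae : ∀ᵐ x ∂μ, 0 ≤ x := by
    rw [ae_iff]
    convert hconc using 2
    ext x; simp [not_le, Set.mem_Iio]
  set c : ℕ → ℝ := fun m => ∫ x, Real.exp (-x / θ) * (x / θ) ^ m / (Nat.factorial m : ℝ) ∂μ with hc
  set e : ℕ → ℕ := fun m => j + k * m with he
  have hinj : Function.Injective e := by
    intro a b hab
    simp only [he, add_right_inj] at hab
    exact Nat.eq_of_mul_eq_mul_left (by omega) hab
  refine ⟨Function.extend e c 0, ?_, ?_, ?_⟩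
  · intro n
    rcases em (∃ m, e m = n) with ⟨m, rfl⟩ | hn
    · rw [hinj.extend_apply]
      apply integral_nonneg_of_ae
      filter_upwards [hae] with x hx
      positivity
    · rw [Function.extend_apply' _ _ _ hn]; rfl
  · rw [hasSum_extend_zero hinj]
    have h := key_hasSum μ hconc θ hθ 1 zero_le_one le_rfl
    simp only [one_pow, mul_one, sub_self, zero_div, neg_zero, zero_mul, Real.exp_zero,
      integral_const, measure_univ, ENNReal.toReal_one, probReal_univ, smul_eq_mul] at h
    exact h
  · intro s hs
    obtain ⟨hs0, hs1⟩ := hs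
    have htk0 : (0:ℝ) ≤ s ^ k := pow_nonneg hs0 k
    have htk1 : s ^ k ≤ 1 := pow_le_one₀ hs0 hs1
    have h := (key_hasSum μ hconc θ hθ (s ^ k) htk0 htk1).mul_left (s ^ j)
    rw [← hφ] at h
    rw [← hinj.hasSum_iff]
    · refine h.congr_fun fun m => ?_
      show Function.extend e c 0 (e m) * s ^ (e m) = _
      rw [hinj.extend_apply]
      simp only [he, pow_add, pow_mul]
      ring
    · intro n hn
      rw [Function.extend_apply' _ _ _ (by simpa [Set.range] using hn)]
      simp
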